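/- Let κ be a regular uncountable cardinal. Suppose for each ordinal α < κ we have a pointed set (E_α, ∗) together with maps φ_α : E_α → E_{α+1} sending ∗ to ∗, and such that for every limit ordinal δ < κ, E_δ is the colimit of the directed system (E_α)_{α<δ}. If (1) card(E_α) < κ for all α < κ, and (2) for every α < κ there exists x ∈ E_α with x ≠ ∗ and φ_α(x) = ∗, then we obtain a contradiction (i.e., no such system exists). -/

import Mathlib

universe u

theorem stmt0_aux {κ : Cardinal.{u}} (hreg : κ.IsRegular) (hunc : Cardinal.aleph0 < κ)
    (E : Ordinal.{u} → Type u) (pt : ∀ α, E α)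
    (F : ∀ {α β : Ordinal.{u}}, α ≤ β → E α → E β)
    (Fcomp : ∀ {α β γ : Ordinal.{u}} (h1 : α ≤ β) (h2 : β ≤ γ) (x : E α),
      F h2 (F h1 x) = F (h1.trans h2) x)
    (Fpt : ∀ {α β : Ordinal.{u}} (h : α ≤ β), F h (pt α) = pt β)
    (hsurj : ∀ δ, δ < κ.ord → Order.IsSuccLimit δ → ∀ x : E δ,
      ∃ (α : Ordinal) (h : α < δ) (y : E α), F h.le y = x)
    (hcard : ∀ α, α < κ.ord → Cardinal.mk (E α) < κ)
    (hstep : ∀ α, α < κ.ord → ∃ x : E α, x ≠ pt α ∧ F (Order.le_succ α) x = pt (Order.succ α)) :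
    False := by
  classical
  have hcof : κ.ord.cof = κ := hreg.cof_eq
  have hκlim : Order.IsSuccLimit κ.ord := Cardinal.isSuccLimit_ord hreg.aleph0_le
  -- the set of "death stages" of an element `y : E α`
  set S : ∀ α : Ordinal.{u}, E α → Set Ordinal.{u} := fun α y =>
    {β | β < κ.ord ∧ ∃ h : α ≤ β, F h y = pt β} with hS
  set g : ∀ α : Ordinal.{u}, E α → Ordinal.{u} := fun α y => sInf (S α y) with hgdef
  have hg_lt : ∀ α y, g α y < κ.ord := by
    intro α y
    rcases (S α y).eq_empty_or_nonempty with h | h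
    · have : g α y = 0 := by
        rw [hgdef]; simp only [h]; exact Ordinal.sInf_empty
      rw [this]; exact hκlim.pos
    · exact (csInf_mem h).1
  -- `H α` bounds all death stages of elements of `E α`
  set H : Ordinal.{u} → Ordinal.{u} := fun α => iSup (g α) with hHdef
  have hgH : ∀ α y, g α y ≤ H α := fun α y => Ordinal.le_iSup _ y
  have hH_lt : ∀ α, α < κ.ord → H α < κ.ord := by
    intro α hα
    refine Ordinal.iSup_lt_ord ?_ fun y => hg_lt α y
    rw [hcof]; exact hcard α hα
  -- an increasing ω-sequence closing off under `H`
  set b : ℕ → Ordinal.{u} := fun n =>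
    Nat.rec 0 (fun _ p => max (p + 1) (Ordinal.bsup.{u, u} p (fun α _ => H α))) n with hb
  have hbsucc : ∀ n, b (n + 1) = max (b n + 1) (Ordinal.bsup.{u, u} (b n) (fun α _ => H α)) :=
    fun n => rfl
  have hblt : ∀ n, b n < b (n + 1) := by
    intro n
    rw [hbsucc]
    exact lt_of_lt_of_le (lt_add_one _) (le_max_left _ _)
  have hbord : ∀ n, b n < κ.ord := by
    intro n
    induction n with
    | zero => exact hκlim.pos
    | succ n ih =>
      rw [hbsucc]
      refine max_lt ?_ ?_
      · simpa using hκlim.succ_lt ih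
      · refine Ordinal.bsup_lt_ord ?_ fun α hα => hH_lt α (hα.trans ih)
        rw [hcof]; exact Cardinal.lt_ord.mp ih
  set δ : Ordinal.{u} := iSup b with hδdef
  have hbδ : ∀ n, b n ≤ δ := fun n => Ordinal.le_iSup b n
  have hδκ : δ < κ.ord := by
    refine Ordinal.iSup_lt_ord_lift ?_ hbord
    rw [hcof]
    simpa using hunc
  have hδlim : Order.IsSuccLimit δ := by
    rw [Ordinal.isSuccLimit_iff]
    constructor
    · intro h0
      have h1 : b 0 < b 1 := hblt 0
      have h2 : b 1 ≤ 0 := h0 ▸ hbδ 1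
      have h3 : b 0 = 0 := rfl
      rw [h3] at h1
      exact absurd (h1.trans_le h2) (lt_irrefl 0)
    · rw [Order.isSuccPrelimit_iff_succ_lt]; intro a ha
      obtain ⟨n, hn⟩ := Ordinal.lt_iSup_iff.mp ha
      have : Order.succ a ≤ b n := Order.succ_le_of_lt hn
      exact lt_of_le_of_lt this ((hblt n).trans_le (hbδ (n + 1)))
  have hclosed : ∀ α, α < δ → H α < δ := by
    intro α hα
    obtain ⟨n, hn⟩ := Ordinal.lt_iSup_iff.mp hα
    have h1 : H α ≤ Ordinal.bsup.{u, u} (b n) (fun α _ => H α) := Ordinal.le_bsup _ α hn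
    have h2 : Ordinal.bsup.{u, u} (b n) (fun α _ => H α) ≤ b (n + 1) := by
      rw [hbsucc]; exact le_max_right _ _
    exact lt_of_le_of_lt (h1.trans h2) ((hblt (n + 1)).trans_le (hbδ (n + 2)))
  -- now derive the contradiction at stage `δ`
  obtain ⟨x, hx, hxd⟩ := hstep δ hδκ
  obtain ⟨α, hαδ, y, hy⟩ := hsurj δ hδκ hδlim x
  have hyd : F (hαδ.le.trans (Order.le_succ δ)) y = pt (Order.succ δ) := by
    rw [← Fcomp hαδ.le (Order.le_succ δ) y, hy]; exact hxd
  have hmem : Order.succ δ ∈ S α y := ⟨hκlim.succ_lt hδκ, hαδ.le.trans (Order.le_succ δ), hyd⟩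
  have hγmem : g α y ∈ S α y := csInf_mem ⟨_, hmem⟩
  obtain ⟨hγκ, hαγ, hγpt⟩ := hγmem
  have hγδ : g α y < δ := lt_of_le_of_lt (hgH α y) (hclosed α hαδ)
  have hxpt : x = pt δ := by
    have h1 : F hγδ.le (F hαγ y) = F hαδ.le y := Fcomp hαγ hγδ.le y
    rw [← hy, ← h1, hγpt, Fpt]
  exact hx hxpt

/-- Let `κ` be a regular uncountable cardinal.  Suppose for each ordinal
`α < κ` we have a pointed set `(E α, pt α)` together with maps `φ_α : E α → E (α+1)`
preserving the base point (here encoded as a functorial system `F` of transition maps,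
whose restriction to successor steps plays the role of the `φ_α`), such that for every
limit ordinal `δ < κ` the set `E δ` is the colimit of the directed system `(E α)_{α<δ}`
(expressed by joint surjectivity `hsurj` and detection of equalities at finite stages
`heq`).  If (1) `card (E α) < κ` for all `α < κ`, and (2) for every `α < κ` there is
`x ∈ E α` with `x ≠ pt α` mapping to the base point of `E (α+1)`, then we obtain a
contradiction: no such system exists. -/
theorem stmt0 {κ : Cardinal} (hreg : κ.IsRegular) (hunc : Cardinal.aleph0 < κ)
    (E : Ordinal → Type*) (pt : ∀ α, E α)
    (F : ∀ {α β : Ordinal}, α ≤ β → E α → E β)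
    (Fid : ∀ (α) (x : E α), F (le_refl α) x = x)
    (Fcomp : ∀ {α β γ : Ordinal} (h1 : α ≤ β) (h2 : β ≤ γ) (x : E α),
      F h2 (F h1 x) = F (h1.trans h2) x)
    (Fpt : ∀ {α β : Ordinal} (h : α ≤ β), F h (pt α) = pt β)
    (hsurj : ∀ δ, δ < κ.ord → Order.IsSuccLimit δ → ∀ x : E δ,
      ∃ (α : Ordinal) (h : α < δ) (y : E α), F h.le y = x)
    (heq : ∀ δ, δ < κ.ord → Order.IsSuccLimit δ → ∀ (α : Ordinal) (h : α < δ) (x y : E α),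
      F h.le x = F h.le y → ∃ (β : Ordinal) (_ : β < δ) (hαβ : α ≤ β), F hαβ x = F hαβ y)
    (hcard : ∀ α, α < κ.ord → Cardinal.mk (E α) < κ)
    (hstep : ∀ α, α < κ.ord → ∃ x : E α, x ≠ pt α ∧ F (Order.le_succ α) x = pt (Order.succ α)) :
    False :=
  stmt0_aux hreg hunc E pt F Fcomp Fpt hsurj hcard hstep
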